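/- For every graph G with a d-clique lift ℳ, the graph G^ℳ is a 1-shallow minor of G ∘ \overline{K_{d+1}}. -/

import Mathlib

open SimpleGraph

variable {V W : Type}

/-- The strong product of two simple graphs. -/
def strongProd (G : SimpleGraph V) (H : SimpleGraph W) : SimpleGraph (V × W) where
  Adj a b := a ≠ b ∧ (a.1 = b.1 ∨ G.Adj a.1 b.1) ∧ (a.2 = b.2 ∨ H.Adj a.2 b.2)
  symm := by
    constructor
    rintro a b ⟨hne, h1, h2⟩
    exact ⟨hne.symm, by tauto, by tauto⟩
  loopless := ⟨fun a h => h.1 rfl⟩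

infixl:70 " ⊠ " => strongProd

/-- The lexicographic product of two simple graphs. -/
def lexProd (G : SimpleGraph V) (H : SimpleGraph W) : SimpleGraph (V × W) where
  Adj a b := G.Adj a.1 b.1 ∨ (a.1 = b.1 ∧ H.Adj a.2 b.2)
  symm := by
    constructor
    rintro a b (h | ⟨h, h'⟩)
    · exact Or.inl h.symm
    · exact Or.inr ⟨h.symm, h'.symm⟩
  loopless := by
    constructor
    rintro a (h | ⟨_, h⟩)
    · exact G.irrefl h
    · exact H.irrefl h

/-- `G` is contained in `H`: `G` is isomorphic to a subgraph of `H`. -/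
def Contains (G : SimpleGraph V) (H : SimpleGraph W) : Prop :=
  ∃ f : V → W, Function.Injective f ∧ ∀ ⦃u v⦄, G.Adj u v → H.Adj (f u) (f v)

/-- `(T, B)` is a tree-decomposition of `G`. -/
def IsTreeDecomp {ι : Type} (G : SimpleGraph V) (T : SimpleGraph ι) (B : ι → Set V) : Prop :=
  T.IsTree ∧
  (∀ ⦃u v⦄, G.Adj u v → ∃ i, u ∈ B i ∧ v ∈ B i) ∧
  (∀ v : V, (T.induce {i | v ∈ B i}).Connected)

/-- The treewidth of `G` is at most `t`. -/
def TreewidthLE (G : SimpleGraph V) (t : ℕ) : Prop :=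
  ∃ (ι : Type) (T : SimpleGraph ι) (B : ι → Set V),
    IsTreeDecomp G T B ∧ ∀ i, (B i).Finite ∧ (B i).ncard ≤ t + 1

/-- The row treewidth of `G` is at most `t`: `G` is contained in `H ⊠ P`
for some graph `H` of treewidth at most `t` and some path `P`. -/
def RowTreewidthLE (G : SimpleGraph V) (t : ℕ) : Prop :=
  ∃ (ι : Type) (H : SimpleGraph ι) (n : ℕ),
    TreewidthLE H t ∧ Contains G (H ⊠ pathGraph n)

/-- `μ` is a model of an `r`-shallow minor `H` in `G`: branch sets are connected,
pairwise disjoint, of radius at most `r`, with adjacent branch sets for each edge of `H`. -/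
def IsShallowMinorModel (H : SimpleGraph W) (G : SimpleGraph V) (r : ℕ) (μ : W → Set V) : Prop :=
  (∀ w, (G.induce (μ w)).Connected) ∧
  (∀ w, ∃ c : μ w, ∀ u : μ w, (G.induce (μ w)).dist c u ≤ r) ∧
  (Pairwise fun w w' => Disjoint (μ w) (μ w')) ∧
  (∀ ⦃w w'⦄, H.Adj w w' → ∃ u ∈ μ w, ∃ v ∈ μ w', G.Adj u v)

/-- `H` is an `r`-shallow minor of `G`. -/
def ShallowMinor (H : SimpleGraph W) (G : SimpleGraph V) (r : ℕ) : Prop :=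
  ∃ μ : W → Set V, IsShallowMinorModel H G r μ

/-- `H` is an `(m/2)`-shallow topological minor of `G`: a subgraph of `G` is an
`m`-subdivision of `H`, i.e. each edge of `H` is replaced by a path of length at most `m+1`,
and these paths are internally disjoint. -/
def ShallowTopMinor (H : SimpleGraph W) (G : SimpleGraph V) (m : ℕ) : Prop :=
  ∃ f : W → V, Function.Injective f ∧
  ∃ P : ∀ ⦃u v⦄, H.Adj u v → G.Walk (f u) (f v),
    (∀ ⦃u v⦄ (h : H.Adj u v), (P h).IsPath ∧ (P h).length ≤ m + 1 ∧
      ∀ x ∈ (P h).support, x ∈ Set.range f → (x = f u ∨ x = f v)) ∧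
    (∀ ⦃u v x y⦄ (h₁ : H.Adj u v) (h₂ : H.Adj x y), s(u,v) ≠ s(x,y) →
      ∀ z ∈ (P h₁).support, z ∈ (P h₂).support →
        (z = f u ∨ z = f v) ∧ (z = f x ∨ z = f y))

/-- The `s`-th power of a graph: vertices at distance at most `s` are adjacent. -/
def powG (G : SimpleGraph V) (s : ℕ) : SimpleGraph V where
  Adj u v := u ≠ v ∧ ∃ p : G.Walk u v, p.length ≤ s
  symm := by
    constructor
    rintro u v ⟨h, p, hp⟩
    exact ⟨h.symm, p.reverse, by simpa using hp⟩
  loopless := ⟨fun v h => h.1 rfl⟩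

/-- The maximum degree of `G` is at most `d`. -/
def MaxDegLE (G : SimpleGraph V) (d : ℕ) : Prop :=
  ∀ v, (G.neighborSet v).Finite ∧ (G.neighborSet v).ncard ≤ d
open SimpleGraph
variable {V W : Type}

/-- `R(G,⪯,v,s)`: vertices `w ⪯ v` reachable from `v` by a path of length at most `s`
whose internal vertices are all `≻ v`. -/
def RSet (G : SimpleGraph V) (le : V → V → Prop) (v : V) (s : ℕ) : Set V :=
  {w | le w v ∧ ∃ p : G.Walk v w, p.length ≤ s ∧
    ∀ u ∈ p.support, u ≠ v → u ≠ w → (le v u ∧ u ≠ v)}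

/-- `Q(G,⪯,v,s)`: vertices `w ⪯ v` reachable from `v` by a path of length at most `s`
whose internal vertices are all `≻ w`. -/
def QSet (G : SimpleGraph V) (le : V → V → Prop) (v : V) (s : ℕ) : Set V :=
  {w | le w v ∧ ∃ p : G.Walk v w, p.length ≤ s ∧
    ∀ u ∈ p.support, u ≠ v → u ≠ w → (le w u ∧ u ≠ w)}

/-- The `s`-strong colouring number of `G` is at most `c`. -/
def ScolLE (G : SimpleGraph V) (s : ℕ) (c : ℕ) : Prop :=
  ∃ le : V → V → Prop, IsLinearOrder V le ∧
    ∀ v, (RSet G le v s).Finite ∧ (RSet G le v s).ncard ≤ c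

/-- The `s`-weak colouring number of `G` is at most `c`. -/
def WcolLE (G : SimpleGraph V) (s : ℕ) (c : ℕ) : Prop :=
  ∃ le : V → V → Prop, IsLinearOrder V le ∧
    ∀ v, (QSet G le v s).Finite ∧ (QSet G le v s).ncard ≤ c

/-- The queue-number of `G` is at most `q`: there is a linear order of `V(G)` and an
assignment of edges to `q` queues such that no two edges in the same queue nest. -/
def QueueLE (G : SimpleGraph V) (q : ℕ) : Prop :=
  ∃ le : V → V → Prop, IsLinearOrder V le ∧
    ∃ σ : V → V → ℕ,
      (∀ u v, σ u v = σ v u) ∧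
      (∀ ⦃u v⦄, G.Adj u v → σ u v < q) ∧
      (∀ a b c d, G.Adj a b → G.Adj c d → σ a b = σ c d →
        (le a b ∧ a ≠ b) → (le c d ∧ c ≠ d) →
        ¬((le a c ∧ a ≠ c) ∧ (le d b ∧ d ≠ b)))

/-- A `(k,d)`-shortcut system for `G`: a set of paths of length at most `k` such that
every vertex is an internal vertex of at most `d` of the paths. -/
structure ShortcutSystem (G : SimpleGraph V) (k d : ℕ) where
  paths : Set ((u : V) × (v : V) × G.Walk u v)
  isPath : ∀ p ∈ paths, p.2.2.IsPath
  lengthLE : ∀ p ∈ paths, p.2.2.length ≤ k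
  internal : ∀ w : V,
    {p ∈ paths | w ∈ p.2.2.support ∧ w ≠ p.1 ∧ w ≠ p.2.1}.Finite ∧
    {p ∈ paths | w ∈ p.2.2.support ∧ w ≠ p.1 ∧ w ≠ p.2.1}.ncard ≤ d

/-- The supergraph `G^𝒫` of `G` obtained by adding an edge `uv` whenever `𝒫`
contains a `(u,v)`-path. -/
def shortcutGraph (G : SimpleGraph V) {k d : ℕ} (P : ShortcutSystem G k d) : SimpleGraph V where
  Adj u v := u ≠ v ∧ (G.Adj u v ∨ ∃ p ∈ P.paths, (p.1 = u ∧ p.2.1 = v) ∨ (p.1 = v ∧ p.2.1 = u))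
  symm := by
    constructor
    rintro u v ⟨h, h'⟩
    refine ⟨h.symm, ?_⟩
    rcases h' with h' | ⟨p, hp, h'⟩
    · exact Or.inl h'.symm
    · exact Or.inr ⟨p, hp, by tauto⟩
  loopless := ⟨fun v h => h.1 rfl⟩

/-- A `d`-clique lift of `G`: a choice `M v ⊆ N(v)` with `|M v| ≤ d` for each vertex `v`. -/
structure CliqueLift (G : SimpleGraph V) (d : ℕ) where
  M : V → Set V
  subset_nbhd : ∀ v, M v ⊆ G.neighborSet v
  finite : ∀ v, (M v).Finite
  card_le : ∀ v, (M v).ncard ≤ d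

/-- The graph `G^ℳ` obtained from `G` by adding the edge `uw` whenever there is a vertex `v`
with `u ∈ M v` and `w ∈ N(v)`. -/
def cliqueLiftGraph (G : SimpleGraph V) {d : ℕ} (ℳ : CliqueLift G d) : SimpleGraph V where
  Adj u w := u ≠ w ∧ (G.Adj u w ∨ ∃ v, (u ∈ ℳ.M v ∧ w ∈ G.neighborSet v) ∨
    (w ∈ ℳ.M v ∧ u ∈ G.neighborSet v))
  symm := by
    constructor
    rintro u w ⟨h, h'⟩
    refine ⟨h.symm, ?_⟩
    rcases h' with h' | ⟨v, h'⟩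
    · exact Or.inl h'.symm
    · exact Or.inr ⟨v, by tauto⟩
  loopless := ⟨fun v h => h.1 rfl⟩

/-- The `m × m` grid graph. -/
def gridGraph (m : ℕ) : SimpleGraph (Fin m × Fin m) where
  Adj a b := |(a.1 : ℤ) - b.1| + |(a.2 : ℤ) - b.2| = 1
  symm := by
    constructor
    intro a b h
    rw [abs_sub_comm ((b.1 : ℤ)), abs_sub_comm ((b.2 : ℤ))]
    exact h
  loopless := by constructor; intro a h; simp at h

/-- For every graph `G` with a `d`-clique lift `ℳ`, the graph `G^ℳ` is a
`1`-shallow minor of `G ∘ K̄_{d+1}`. -/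
theorem cliqueLift_shallowMinor {V : Type} (G : SimpleGraph V) (d : ℕ)
    (ℳ : CliqueLift G d) :
    ShallowMinor (cliqueLiftGraph G ℳ) (lexProd G (⊥ : SimpleGraph (Fin (d + 1)))) 1 := by
  classical
  -- choose an injection from each `M u` into `Fin d`
  have hemb : ∀ u : V, ∃ f : ℳ.M u → Fin d, Function.Injective f := by
    intro u
    have hf : (ℳ.M u).Finite := ℳ.finite u
    haveI := hf.fintype
    have hcard : Fintype.card (ℳ.M u) ≤ d := by
      have h1 : Nat.card (ℳ.M u) = (ℳ.M u).ncard := Nat.card_coe_set_eq _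
      have h2 : Nat.card (ℳ.M u) = Fintype.card (ℳ.M u) := Nat.card_eq_fintype_card
      have h3 := ℳ.card_le u
      omega
    obtain ⟨g⟩ : Nonempty (ℳ.M u ↪ Fin d) :=
      Function.Embedding.nonempty_of_card_le (by simpa using hcard)
    exact ⟨g, g.injective⟩
  choose f hf using hemb
  set H : SimpleGraph (V × Fin (d + 1)) := lexProd G (⊥ : SimpleGraph (Fin (d + 1))) with hH
  -- the branch sets
  set μ : V → Set (V × Fin (d + 1)) := fun v =>
    insert (v, (0 : Fin (d + 1)))
      {p : V × Fin (d + 1) | ∃ (u : V) (h : v ∈ ℳ.M u), p = (u, (f u ⟨v, h⟩).succ)}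
    with hμ
  have hcenter : ∀ v, (v, (0 : Fin (d + 1))) ∈ μ v := fun v => Set.mem_insert _ _
  -- adjacency of each branch-set element to the center
  have hadj : ∀ v, ∀ x ∈ μ v, x = (v, (0 : Fin (d + 1))) ∨
      H.Adj (v, (0 : Fin (d + 1))) x := by
    intro v x hx
    rcases hx with hx | ⟨u, hu, rfl⟩
    · exact Or.inl hx
    · right
      have : G.Adj u v := ℳ.subset_nbhd u hu
      exact Or.inl this.symm
  refine ⟨μ, ?_, ?_, ?_, ?_⟩
  · -- connectivity
    intro v
    have hc : (v, (0 : Fin (d + 1))) ∈ μ v := hcenter v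
    have key : ∀ a : μ v, (H.induce (μ v)).Reachable ⟨_, hc⟩ a := by
      rintro ⟨x, hx⟩
      rcases hadj v x hx with h | h
      · subst h
        exact Reachable.refl _
      · exact (SimpleGraph.Adj.reachable (by exact h : (H.induce (μ v)).Adj ⟨_, hc⟩ ⟨x, hx⟩))
    haveI : Nonempty (μ v) := ⟨⟨_, hc⟩⟩
    exact SimpleGraph.Connected.mk fun a b => (key a).symm.trans (key b)
  · -- radius ≤ 1
    intro v
    have hc : (v, (0 : Fin (d + 1))) ∈ μ v := hcenter v
    refine ⟨⟨_, hc⟩, ?_⟩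
    rintro ⟨x, hx⟩
    rcases hadj v x hx with h | h
    · subst h
      exact le_trans (le_of_eq SimpleGraph.dist_self) (Nat.zero_le 1)
    · have hadj' : (H.induce (μ v)).Adj ⟨_, hc⟩ ⟨x, hx⟩ := h
      calc (H.induce (μ v)).dist ⟨_, hc⟩ ⟨x, hx⟩ ≤ hadj'.toWalk.length :=
            SimpleGraph.dist_le _
        _ = 1 := rfl
  · -- disjointness
    intro v v' hne
    rw [Set.disjoint_left]
    rintro x (hx | ⟨u, hu, rfl⟩) hx'
    · subst hx
      rcases hx' with hx' | ⟨u, hu, heq⟩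
      · simp only [Prod.mk.injEq] at hx'
        exact hne hx'.1
      · have : (0 : Fin (d + 1)) = (f u ⟨v', hu⟩).succ := congrArg Prod.snd heq
        exact (Fin.succ_ne_zero _) this.symm
    · rcases hx' with hx' | ⟨u', hu', heq⟩
      · have : (f u ⟨v, hu⟩).succ = (0 : Fin (d + 1)) := congrArg Prod.snd hx'
        exact (Fin.succ_ne_zero _) this
      · have h1 : u = u' := congrArg Prod.fst heq
        subst h1
        have h2 : (f u ⟨v, hu⟩).succ = (f u ⟨v', hu'⟩).succ := congrArg Prod.snd heq
        have h3 := hf u (Fin.succ_injective _ h2)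
        exact hne (congrArg Subtype.val h3)
  · -- adjacency condition
    rintro u w (⟨hne, huw | ⟨v, ⟨hu, hw⟩ | ⟨hw, hu⟩⟩⟩ : u ≠ w ∧ (G.Adj u w ∨ ∃ v, (u ∈ ℳ.M v ∧ w ∈ G.neighborSet v) ∨ (w ∈ ℳ.M v ∧ u ∈ G.neighborSet v)))
    · exact ⟨(u, 0), hcenter u, (w, 0), hcenter w, Or.inl huw⟩
    · refine ⟨(v, (f v ⟨u, hu⟩).succ), Or.inr ⟨v, hu, rfl⟩, (w, 0), hcenter w, ?_⟩
      exact Or.inl hw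
    · refine ⟨(u, 0), hcenter u, (v, (f v ⟨w, hw⟩).succ), Or.inr ⟨v, hw, rfl⟩, ?_⟩
      exact Or.inl (G.symm.symm _ _ hu)
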